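/- For any h ∈ H, and L_p loss with boundedness constant M, |L_q(h, h'') − L_q(h, f_Q)| ≤ p M^{p−1} [L_q(h'', f_Q)]^{1/p}, and consequently max_{h''∈H''} |L_q(h, h'') − L_q(h, f_Q)| ≤ p M^{p−1} r whenever L_q(h'', f_Q) ≤ r^p for all h'' ∈ H''. -/

import Mathlib

open Finset

private lemma rpow_sub_rpow_le {a b M p : ℝ} (hb : 0 ≤ b) (hba : b ≤ a) (haM : a ≤ M)
    (hp : 1 ≤ p) : a ^ p - b ^ p ≤ p * M ^ (p - 1) * (a - b) := by
  have ha : 0 ≤ a := hb.trans hba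
  rcases eq_or_lt_of_le ha with ha0 | ha0
  · have hb0 : b = 0 := le_antisymm (hba.trans ha0.symm.le) hb
    simp [← ha0, hb0]
  · have hM : 0 < M := lt_of_lt_of_le ha0 haM
    set t : ℝ := b / a with ht
    have ht0 : 0 ≤ t := div_nonneg hb ha0.le
    have ht1 : t ≤ 1 := (div_le_one ha0).mpr hba
    have hbern : 1 + p * (t - 1) ≤ t ^ p := by
      have h' := one_add_mul_self_le_rpow_one_add (s := t - 1) (by linarith) hp
      have he : 1 + (t - 1) = t := by ring
      rwa [he] at h'
    have key : a ^ p - b ^ p ≤ p * a ^ (p - 1) * (a - b) := by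
      have hbt : b = t * a := by rw [ht, div_mul_cancel₀ b ha0.ne']
      have hbp : b ^ p = t ^ p * a ^ p := by
        rw [hbt, Real.mul_rpow ht0 ha0.le]
      have hap : 0 < a ^ p := Real.rpow_pos_of_pos ha0 p
      have h1 : a ^ p - b ^ p = (1 - t ^ p) * a ^ p := by rw [hbp]; ring
      have h2 : (1 - t ^ p) ≤ p * (1 - t) := by linarith [hbern]
      have h3 : a ^ p = a ^ (p - 1) * a := by
        rw [← Real.rpow_add_one ha0.ne' (p - 1)]; ring_nf
      calc a ^ p - b ^ p = (1 - t ^ p) * a ^ p := h1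
        _ ≤ p * (1 - t) * a ^ p := by
            apply mul_le_mul_of_nonneg_right h2 hap.le
        _ = p * a ^ (p - 1) * (a - b) := by
            rw [h3, hbt]; ring
    refine key.trans ?_
    have : a ^ (p - 1) ≤ M ^ (p - 1) :=
      Real.rpow_le_rpow ha0.le haM (by linarith)
    have hab : 0 ≤ a - b := by linarith
    have hp0 : (0:ℝ) ≤ p := by linarith
    exact mul_le_mul_of_nonneg_right (mul_le_mul_of_nonneg_left this hp0) hab

/-- For the `L_p` loss with boundedness constant `M`:
`|L_q(h,h'') − L_q(h,f_Q)| ≤ p M^(p−1) [L_q(h'',f_Q)]^(1/p)`, and consequently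
`|L_q(h,h'') − L_q(h,f_Q)| ≤ p M^(p−1) r` for every `h'' ∈ H''` whenever
`L_q(h'',f_Q) ≤ r^p` on `H''`. -/
theorem lq_diff_bound {X : Type*} (S : Finset X)
    (q : X → ℝ) (hq : ∀ x ∈ S, 0 ≤ q x) (hq1 : ∑ x ∈ S, q x = 1)
    (p M r : ℝ) (hp : 1 ≤ p) (hM : 0 < M) (hrpos : 0 ≤ r)
    (h fQ : X → ℝ) (H'' : Set (X → ℝ))
    (Lq : (X → ℝ) → (X → ℝ) → ℝ)
    (hLq : ∀ f g : X → ℝ, Lq f g = ∑ x ∈ S, q x * |f x - g x| ^ p)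
    (hbound : ∀ h'' ∈ H'', ∀ x ∈ S, |h x - h'' x| ≤ M)
    (hboundQ : ∀ x ∈ S, |h x - fQ x| ≤ M)
    (hbound'' : ∀ h'' ∈ H'', ∀ x ∈ S, |h'' x - fQ x| ≤ M)
    (hr : ∀ h'' ∈ H'', Lq h'' fQ ≤ r ^ p) :
    (∀ h'' ∈ H'',
      |Lq h h'' - Lq h fQ| ≤ p * M ^ (p - 1) * (Lq h'' fQ) ^ (1 / p)) ∧
    (∀ h'' ∈ H'', |Lq h h'' - Lq h fQ| ≤ p * M ^ (p - 1) * r) := by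
  have hp0 : 0 < p := lt_of_lt_of_le one_pos hp
  have hC : ∀ h'' ∈ H'', |Lq h h'' - Lq h fQ| ≤ p * M ^ (p - 1) * (Lq h'' fQ) ^ (1 / p) := by
    intro h'' hmem
    -- pointwise bound
    have pointwise : ∀ x ∈ S,
        |q x * |h x - h'' x| ^ p - q x * |h x - fQ x| ^ p|
          ≤ q x * (p * M ^ (p - 1) * |h'' x - fQ x|) := by
      intro x hx
      have hqx := hq x hx
      rw [← mul_sub, abs_mul, abs_of_nonneg hqx]
      apply mul_le_mul_of_nonneg_left _ hqx
      set a := |h x - h'' x| with ha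
      set b := |h x - fQ x| with hb
      have habs : |a - b| ≤ |h'' x - fQ x| := by
        have h1 := abs_abs_sub_abs_le_abs_sub (h x - h'' x) (h x - fQ x)
        rw [show h x - h'' x - (h x - fQ x) = -(h'' x - fQ x) by ring, abs_neg] at h1
        simpa [ha, hb] using h1
      rcases le_total b a with hle | hle
      · have := rpow_sub_rpow_le (abs_nonneg _) hle (hbound _ hmem x hx) hp
        rw [abs_of_nonneg (by
          have := Real.rpow_le_rpow (abs_nonneg _) hle hp0.le
          linarith)]
        refine this.trans ?_
        apply mul_le_mul_of_nonneg_left _ (by positivity)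
        calc a - b ≤ |a - b| := le_abs_self _
          _ ≤ _ := habs
      · have := rpow_sub_rpow_le (abs_nonneg _) hle (hboundQ x hx) hp
        rw [abs_of_nonpos (by
          have := Real.rpow_le_rpow (abs_nonneg _) hle hp0.le
          linarith), neg_sub]
        refine this.trans ?_
        apply mul_le_mul_of_nonneg_left _ (by positivity)
        calc b - a ≤ |b - a| := le_abs_self _
          _ = |a - b| := abs_sub_comm _ _
          _ ≤ _ := habs
    -- sum up
    have step1 : |Lq h h'' - Lq h fQ|
        ≤ p * M ^ (p - 1) * ∑ x ∈ S, q x * |h'' x - fQ x| := by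
      rw [hLq, hLq, ← Finset.sum_sub_distrib]
      calc |∑ x ∈ S, (q x * |h x - h'' x| ^ p - q x * |h x - fQ x| ^ p)|
          ≤ ∑ x ∈ S, |q x * |h x - h'' x| ^ p - q x * |h x - fQ x| ^ p| :=
            Finset.abs_sum_le_sum_abs _ _
        _ ≤ ∑ x ∈ S, q x * (p * M ^ (p - 1) * |h'' x - fQ x|) :=
            Finset.sum_le_sum pointwise
        _ = p * M ^ (p - 1) * ∑ x ∈ S, q x * |h'' x - fQ x| := by
            rw [Finset.mul_sum]; congr 1; ext x; ring
    -- Jensen / power mean: ∑ q C ≤ (∑ q C^p)^(1/p)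
    have hjensen : ∑ x ∈ S, q x * |h'' x - fQ x| ≤ (Lq h'' fQ) ^ (1 / p) := by
      have hsum0 : 0 ≤ ∑ x ∈ S, q x * |h'' x - fQ x| :=
        Finset.sum_nonneg fun x hx => mul_nonneg (hq x hx) (abs_nonneg _)
      have hpow : (∑ x ∈ S, q x * |h'' x - fQ x|) ^ p ≤ Lq h'' fQ := by
        rw [hLq]
        exact Real.rpow_arith_mean_le_arith_mean_rpow S q (fun x => |h'' x - fQ x|)
          hq hq1 (fun x _ => abs_nonneg _) hp
      have := Real.rpow_le_rpow (by positivity) hpow (by positivity : (0:ℝ) ≤ 1 / p)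
      rwa [← Real.rpow_mul hsum0, mul_one_div, div_self hp0.ne', Real.rpow_one] at this
    calc |Lq h h'' - Lq h fQ| ≤ p * M ^ (p - 1) * ∑ x ∈ S, q x * |h'' x - fQ x| := step1
      _ ≤ p * M ^ (p - 1) * (Lq h'' fQ) ^ (1 / p) := by
          apply mul_le_mul_of_nonneg_left hjensen (by positivity)
  refine ⟨hC, fun h'' hmem => ?_⟩
  refine (hC h'' hmem).trans ?_
  apply mul_le_mul_of_nonneg_left _ (by positivity)
  have hLnn : 0 ≤ Lq h'' fQ := by
    rw [hLq]
    exact Finset.sum_nonneg fun x hx =>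
      mul_nonneg (hq x hx) (Real.rpow_nonneg (abs_nonneg _) _)
  calc (Lq h'' fQ) ^ (1 / p) ≤ (r ^ p) ^ (1 / p) :=
        Real.rpow_le_rpow hLnn (hr h'' hmem) (by positivity)
    _ = r := by
        rw [← Real.rpow_mul hrpos, mul_one_div, div_self hp0.ne', Real.rpow_one]
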